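/- arXiv:1510.03737 — 3 statements merged into one kernel-verified Lean document; each statement's English description precedes it below -/
import Mathlib

section
/- Let p, q ∈ ℂ^{n+1} be nonzero with 0 < d(p,q) < π/2. Then the initial velocity of the reversed geodesic satisfies γ₀'(q,p) = ((q·p̄)/(|p|·|q|))·(tan(d(p,q))·(p/|p|) − γ₀'(p,q)). -/
noncomputable section

/-- Hermitian product `w·z̄ = Σᵢ wⁱ·conj(zⁱ)` on `ℂ^m`. -/
def herm {m : ℕ} (w z : EuclideanSpace ℂ (Fin m)) : ℂ :=
  ∑ i, w i * (starRingEnd ℂ) (z i)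

/-- Fubini–Study distance between (the projective classes of) `p` and `q`. -/
def fsDist {m : ℕ} (p q : EuclideanSpace ℂ (Fin m)) : ℝ :=
  Real.arccos (‖herm p q‖ / (‖p‖ * ‖q‖))

/-- Initial velocity `γ₀'(p,q)` of the geodesic from `[p]` to `[q]`. -/
def gammaDir {m : ℕ} (p q : EuclideanSpace ℂ (Fin m)) : EuclideanSpace ℂ (Fin m) :=
  (Real.cot (fsDist p q) : ℂ) • (((‖p‖ : ℂ) / herm q p) • q - (‖p‖ : ℂ)⁻¹ • p)

/-- The geodesic `γ_t(p,q) = cos t·(p/|p|) + sin t·γ₀'(p,q)`. -/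
def geo {m : ℕ} (t : ℝ) (p q : EuclideanSpace ℂ (Fin m)) : EuclideanSpace ℂ (Fin m) :=
  (Real.cos t : ℂ) • ((‖p‖ : ℂ)⁻¹ • p) + (Real.sin t : ℂ) • gammaDir p q

/-- The velocity `γ_t'(p,q) = −sin t·(p/|p|) + cos t·γ₀'(p,q)`. -/
def geoVel {m : ℕ} (t : ℝ) (p q : EuclideanSpace ℂ (Fin m)) : EuclideanSpace ℂ (Fin m) :=
  (-(Real.sin t) : ℂ) • ((‖p‖ : ℂ)⁻¹ • p) + (Real.cos t : ℂ) • gammaDir p q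

lemma herm_conj {m : ℕ} (p q : EuclideanSpace ℂ (Fin m)) :
    herm q p = (starRingEnd ℂ) (herm p q) := by
  simp [herm, map_sum, mul_comm]

lemma herm_eq_inner {m : ℕ} (p q : EuclideanSpace ℂ (Fin m)) :
    herm p q = @inner ℂ _ _ q p := by
  simp [herm, PiLp.inner_apply, mul_comm]

lemma fsDist_symm {m : ℕ} (p q : EuclideanSpace ℂ (Fin m)) :
    fsDist q p = fsDist p q := by
  unfold fsDist
  rw [herm_conj, Complex.norm_conj, mul_comm ‖q‖ ‖p‖]

lemma abs_herm {m : ℕ} (p q : EuclideanSpace ℂ (Fin m)) (hp : p ≠ 0) (hq : q ≠ 0) :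
    ‖herm p q‖ = Real.cos (fsDist p q) * (‖p‖ * ‖q‖) := by
  have hpn : 0 < ‖p‖ := norm_pos_iff.mpr hp
  have hqn : 0 < ‖q‖ := norm_pos_iff.mpr hq
  have hCS : ‖herm p q‖ ≤ ‖p‖ * ‖q‖ := by
    rw [herm_eq_inner]
    calc ‖@inner ℂ _ _ q p‖ = ‖@inner ℂ _ _ q p‖ := rfl
    _ ≤ ‖q‖ * ‖p‖ := norm_inner_le_norm q p
    _ = ‖p‖ * ‖q‖ := mul_comm _ _
  unfold fsDist
  rw [Real.cos_arccos (le_trans (by norm_num : (-1:ℝ) ≤ 0) (by positivity)) (by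
    rw [div_le_one (by positivity)]; exact hCS)]
  field_simp

theorem stmt3 {n : ℕ} (p q : EuclideanSpace ℂ (Fin (n + 1))) (hp : p ≠ 0) (hq : q ≠ 0)
    (hd0 : 0 < fsDist p q) (hd2 : fsDist p q < Real.pi / 2) :
    gammaDir q p = (herm q p / ((‖p‖ : ℂ) * (‖q‖ : ℂ))) •
      ((Real.tan (fsDist p q) : ℂ) • ((‖p‖ : ℂ)⁻¹ • p) - gammaDir p q) := by
  have hpn : (0:ℝ) < ‖p‖ := norm_pos_iff.mpr hp
  have hqn : (0:ℝ) < ‖q‖ := norm_pos_iff.mpr hq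
  have hcos : 0 < Real.cos (fsDist p q) :=
    Real.cos_pos_of_mem_Ioo ⟨by linarith [Real.pi_pos], hd2⟩
  have hsin : 0 < Real.sin (fsDist p q) :=
    Real.sin_pos_of_pos_of_lt_pi hd0 (by linarith [Real.pi_pos])
  have habs := abs_herm p q hp hq
  have habspos : 0 < ‖herm p q‖ := by rw [habs]; positivity
  have hA0 : herm p q ≠ 0 := by
    intro h; rw [h] at habspos; simp at habspos
  have hB0 : herm q p ≠ 0 := by
    rw [herm_conj]; simpa using hA0
  have hmul : herm p q * herm q p =
      ((Real.cos (fsDist p q) * (‖p‖ * ‖q‖)) ^ 2 : ℝ) := by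
    rw [herm_conj p q, Complex.mul_conj, ← Complex.sq_norm, habs]
  unfold gammaDir
  rw [fsDist_symm]
  rw [Real.cot_eq_cos_div_sin, Real.tan_eq_sin_div_cos]
  have hS : Complex.sin ↑(fsDist p q) ≠ 0 := by
    rw [← Complex.ofReal_sin]; exact_mod_cast hsin.ne'
  have hC : Complex.cos ↑(fsDist p q) ≠ 0 := by
    rw [← Complex.ofReal_cos]; exact_mod_cast hcos.ne'
  have hmul' : herm p q * herm q p =
      (Complex.cos ↑(fsDist p q)) ^ 2 * (‖p‖ : ℂ) ^ 2 * (‖q‖ : ℂ) ^ 2 := by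
    rw [hmul]; push_cast [Complex.ofReal_cos]; ring
  have hP : (‖p‖ : ℂ) ≠ 0 := by exact_mod_cast hpn.ne'
  have hQ : (‖q‖ : ℂ) ≠ 0 := by exact_mod_cast hqn.ne'
  have hpyth := Complex.sin_sq_add_cos_sq (↑(fsDist p q) : ℂ)
  match_scalars
  · field_simp
    ring_nf
    linear_combination (-Complex.cos ↑(fsDist p q) ^ 2 -
        Complex.sin ↑(fsDist p q) ^ 2) * hmul' +
      (-(Complex.cos ↑(fsDist p q) ^ 2 * (‖p‖:ℂ) ^ 2 * (‖q‖:ℂ) ^ 2)) * hpyth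
  · field_simp
end
end

section
/- Let p, q ∈ ℂ^{n+1} be nonzero with 0 < d(p,q) < π/2 and let z ∈ ℂ^{n+1} be nonzero. Then: (a) if inf_{t ∈ ℝ} d(z, γ_t(p,q)) < π/4, then z·ᾱ ≠ 0 and z·β̄ ≠ 0; (b) μ_{p,q}(γ_t(p,q)) = 0 for every t ∈ ℝ; (c) if z·ᾱ ≠ 0 and z·β̄ ≠ 0, then inf_{t ∈ ℝ} d(z, γ_t(p,q)) < π/2 and μ_{p,q}(z) ≥ log(sec(inf_{t ∈ ℝ} d(z, γ_t(p,q)))). -/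
noncomputable section

/-- `α = (p/|p| + i·γ₀'(p,q))/√2`. -/
def alphaV {m : ℕ} (p q : EuclideanSpace ℂ (Fin m)) : EuclideanSpace ℂ (Fin m) :=
  ((Real.sqrt 2 : ℂ))⁻¹ • ((‖p‖ : ℂ)⁻¹ • p + Complex.I • gammaDir p q)

/-- `β = (p/|p| − i·γ₀'(p,q))/√2`. -/
def betaV {m : ℕ} (p q : EuclideanSpace ℂ (Fin m)) : EuclideanSpace ℂ (Fin m) :=
  ((Real.sqrt 2 : ℂ))⁻¹ • ((‖p‖ : ℂ)⁻¹ • p - Complex.I • gammaDir p q)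

/-- `μ_{p,q}(z) = −(1/2)·log(2·|z·ᾱ|·|z·β̄|/|z|²)`. -/
def muW {m : ℕ} (p q z : EuclideanSpace ℂ (Fin m)) : ℝ :=
  -(1 / 2 : ℝ) * Real.log (2 * ‖herm z (alphaV p q)‖ *
    ‖herm z (betaV p q)‖ / ‖z‖ ^ 2)

open Complex
open scoped InnerProductSpace ComplexConjugate

lemma exp_rot (A : ℂ) (t m : ℝ) (ht : t + A.arg = m) :
    Complex.exp (t * I) * A = ((‖A‖ : ℝ) : ℂ) * Complex.exp ((m : ℝ) * I) := by
  conv_lhs => rw [← Complex.norm_mul_exp_arg_mul_I A]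
  rw [← ht]
  rw [mul_comm (Complex.exp _), mul_assoc, ← Complex.exp_add]
  push_cast
  ring_nf

lemma exp_sup (A B : ℂ) : ∃ t : ℝ, Complex.exp (t * I) * A + Complex.exp (-t * I) * B
    = ((‖A‖ + ‖B‖ : ℝ) : ℂ) * Complex.exp (((A.arg + B.arg)/2 : ℝ) * I) := by
  refine ⟨(B.arg - A.arg)/2, ?_⟩
  rw [show (-(((B.arg - A.arg)/2 : ℝ)) : ℂ) = ((-(B.arg - A.arg)/2 : ℝ) : ℂ) by push_cast; ring]
  rw [exp_rot A ((B.arg - A.arg)/2) ((A.arg + B.arg)/2) (by ring),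
    exp_rot B (-(B.arg - A.arg)/2) ((A.arg + B.arg)/2) (by ring)]
  push_cast
  ring

lemma exp_bound (A B : ℂ) (t : ℝ) :
    ‖Complex.exp (t * I) * A + Complex.exp (-t * I) * B‖ ≤ ‖A‖ + ‖B‖ := by
  calc ‖Complex.exp (t * I) * A + Complex.exp (-t * I) * B‖
      ≤ ‖Complex.exp (t * I) * A‖ + ‖Complex.exp (-t * I) * B‖ :=
        norm_add_le _ _
    _ = ‖A‖ + ‖B‖ := by
        have h1 : ‖Complex.exp ((t:ℝ) * I)‖ = 1 := Complex.norm_exp_ofReal_mul_I t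
        have h2 : ‖Complex.exp ((-t:ℝ) * I)‖ = 1 := Complex.norm_exp_ofReal_mul_I (-t)
        simp only [norm_mul, h1, one_mul]
        push_cast at h2
        rw [h2, one_mul]

lemma arccos_anti {x y : ℝ} (hx : -1 ≤ x) (hxy : x ≤ y) : Real.arccos y ≤ Real.arccos x := by
  unfold Real.arccos
  have := Real.monotone_arcsin hxy
  linarith

lemma herm_eq {m : ℕ} (w z : EuclideanSpace ℂ (Fin m)) : herm w z = ⟪z, w⟫_ℂ := by
  simp [herm, PiLp.inner_apply, mul_comm]

lemma inner_u_u {m : ℕ} (p : EuclideanSpace ℂ (Fin m)) (hp : p ≠ 0) :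
    ⟪(‖p‖:ℂ)⁻¹ • p, (‖p‖:ℂ)⁻¹ • p⟫_ℂ = 1 := by
  have hpn : (‖p‖ : ℂ) ≠ 0 := by
    simpa using norm_ne_zero_iff.mpr hp
  simp only [inner_smul_left, inner_smul_right, map_inv₀, Complex.conj_ofReal]
  rw [inner_self_eq_norm_sq_to_K]
  field_simp
  rfl

lemma inner_u_v {m : ℕ} (p q : EuclideanSpace ℂ (Fin m)) (hp : p ≠ 0)
    (h0 : herm q p ≠ 0) :
    ⟪(‖p‖:ℂ)⁻¹ • p, gammaDir p q⟫_ℂ = 0 := by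
  have hpn : (‖p‖ : ℂ) ≠ 0 := by simpa using norm_ne_zero_iff.mpr hp
  have hpq : ⟪p, q⟫_ℂ = herm q p := (herm_eq q p).symm
  simp only [gammaDir, inner_smul_left, inner_smul_right, inner_sub_right, map_inv₀,
    Complex.conj_ofReal, hpq]
  rw [inner_self_eq_norm_sq_to_K]
  field_simp
  rw [RCLike.ofReal_eq_complex_ofReal, sub_self]
  ring

lemma inner_v_v {m : ℕ} (p q : EuclideanSpace ℂ (Fin m)) (hp : p ≠ 0)
    (h0 : herm q p ≠ 0) (c s : ℝ)
    (hc : ‖herm q p‖ = c * (‖p‖ * ‖q‖))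
    (hcot : Real.cot (fsDist p q) = c / s)
    (hs : s ^ 2 = 1 - c ^ 2) (hs0 : s ≠ 0) (hc0 : c ≠ 0) :
    ⟪gammaDir p q, gammaDir p q⟫_ℂ = 1 := by
  have hpn : (‖p‖ : ℂ) ≠ 0 := by simpa using norm_ne_zero_iff.mpr hp
  have hpq : ⟪p, q⟫_ℂ = herm q p := (herm_eq q p).symm
  have hqp : ⟪q, p⟫_ℂ = conj (herm q p) := by rw [← inner_conj_symm, hpq]
  have hH : conj (herm q p) * herm q p = ((c * (‖p‖ * ‖q‖) : ℝ) : ℂ) ^ 2 := by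
    rw [mul_comm, Complex.mul_conj, ← hc, Complex.normSq_eq_norm_sq]
    push_cast; ring
  have hH0 : conj (herm q p) ≠ 0 := by simpa using h0
  have hqnc : (‖q‖ : ℂ) ≠ 0 := by
    intro h
    rw [show (‖q‖:ℝ) = 0 by exact_mod_cast h] at hc
    simp at hc
    exact h0 (norm_eq_zero.mp (by simp [hc]))
  have hsC : ((s:ℂ)) ^ 2 = 1 - (c:ℂ) ^ 2 := by exact_mod_cast congrArg (fun x : ℝ => (x : ℂ)) hs
  simp only [gammaDir, hcot, inner_smul_left, inner_smul_right, inner_sub_left, inner_sub_right,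
    map_inv₀, map_div₀, Complex.conj_ofReal, hpq, hqp]
  rw [inner_self_eq_norm_sq_to_K, inner_self_eq_norm_sq_to_K]
  have hsc : (s:ℂ) ≠ 0 := by exact_mod_cast Complex.ofReal_ne_zero.mpr hs0
  have hcc : (c:ℂ) ≠ 0 := by exact_mod_cast Complex.ofReal_ne_zero.mpr hc0
  push_cast
  push_cast at hH
  field_simp
  rw [RCLike.ofReal_eq_complex_ofReal, sub_self, mul_zero, sub_zero]
  linear_combination (-(‖p‖:ℂ)^2) * hH +
    (-((‖p‖:ℂ)^2 * herm q p * conj (herm q p))) * hsC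

set_option maxHeartbeats 2000000 in
theorem stmt10 {n : ℕ} (p q : EuclideanSpace ℂ (Fin (n + 1))) (hp : p ≠ 0) (hq : q ≠ 0)
    (hd0 : 0 < fsDist p q) (hd2 : fsDist p q < Real.pi / 2)
    (z : EuclideanSpace ℂ (Fin (n + 1))) (hz : z ≠ 0) :
    ((⨅ t : ℝ, fsDist z (geo t p q)) < Real.pi / 4 →
      herm z (alphaV p q) ≠ 0 ∧ herm z (betaV p q) ≠ 0) ∧
    (∀ t : ℝ, muW p q (geo t p q) = 0) ∧
    (herm z (alphaV p q) ≠ 0 → herm z (betaV p q) ≠ 0 →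
      (⨅ t : ℝ, fsDist z (geo t p q)) < Real.pi / 2 ∧
      muW p q z ≥ Real.log ((Real.cos (⨅ t : ℝ, fsDist z (geo t p q)))⁻¹)) := by
  have hpn : (0:ℝ) < ‖p‖ := norm_pos_iff.mpr hp
  have hqn : (0:ℝ) < ‖q‖ := norm_pos_iff.mpr hq
  have hzn : (0:ℝ) < ‖z‖ := norm_pos_iff.mpr hz
  set c : ℝ := ‖herm p q‖ / (‖p‖ * ‖q‖) with hcdef
  have hfspq : fsDist p q = Real.arccos c := rfl
  rw [hfspq] at hd0 hd2
  have hc1 : c < 1 := Real.arccos_pos.mp hd0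
  have hc0 : 0 < c := Real.arccos_lt_pi_div_two.mp hd2
  have hpqconj : herm p q = conj (herm q p) := by
    rw [herm_eq, herm_eq, inner_conj_symm]
  have hc : ‖herm q p‖ = c * (‖p‖ * ‖q‖) := by
    rw [hcdef, hpqconj, Complex.norm_conj]; field_simp
  have h0 : herm q p ≠ 0 := by
    intro h; rw [h, norm_zero] at hc; nlinarith [mul_pos hc0 (mul_pos hpn hqn)]
  set s : ℝ := Real.sqrt (1 - c ^ 2) with hsdef
  have hs2 : s ^ 2 = 1 - c ^ 2 := Real.sq_sqrt (by nlinarith)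
  have hs0 : 0 < s := Real.sqrt_pos.mpr (by nlinarith)
  have hcot : Real.cot (fsDist p q) = c / s := by
    rw [hfspq, Real.cot_eq_cos_div_sin, Real.cos_arccos (by linarith) hc1.le, Real.sin_arccos]
  set u : EuclideanSpace ℂ (Fin (n+1)) := (‖p‖:ℂ)⁻¹ • p with hu
  set v : EuclideanSpace ℂ (Fin (n+1)) := gammaDir p q with hv
  have huu : ⟪u, u⟫_ℂ = 1 := inner_u_u p hp
  have huv : ⟪u, v⟫_ℂ = 0 := inner_u_v p q hp h0
  have hvv : ⟪v, v⟫_ℂ = 1 := inner_v_v p q hp h0 c s hc hcot hs2 hs0.ne' hc0.ne'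
  have hvu : ⟪v, u⟫_ℂ = 0 := by rw [← inner_conj_symm, huv, map_zero]
  -- norm of geodesic points
  have hgeo : ∀ t : ℝ, ⟪geo t p q, geo t p q⟫_ℂ = 1 := by
    intro t
    show ⟪(Real.cos t : ℂ) • u + (Real.sin t : ℂ) • v,
      (Real.cos t : ℂ) • u + (Real.sin t : ℂ) • v⟫_ℂ = 1
    simp only [inner_add_left, inner_add_right, inner_smul_left, inner_smul_right,
      huu, huv, hvu, hvv, Complex.conj_ofReal, mul_zero, mul_one, add_zero, zero_add]
    have hsc : ((Real.sin t ^ 2 + Real.cos t ^ 2 : ℝ) : ℂ) = 1 := by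
      rw [Real.sin_sq_add_cos_sq]; norm_num
    push_cast at hsc ⊢
    linear_combination hsc
  have hgeon : ∀ t : ℝ, ‖geo t p q‖ = 1 := by
    intro t
    have h2 : (‖geo t p q‖:ℝ) ^ 2 = 1 := by
      rw [@norm_sq_eq_re_inner ℂ, hgeo t]; simp
    nlinarith [norm_nonneg (geo t p q)]
  set U : ℂ := ⟪u, z⟫_ℂ with hU
  set V : ℂ := ⟪v, z⟫_ℂ with hV
  have hs2ne : ((Real.sqrt 2 : ℝ) : ℂ) ≠ 0 := by
    simp [Real.sqrt_eq_zero']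
  have s2c : ((Real.sqrt 2 : ℝ) : ℂ) * ((Real.sqrt 2 : ℝ) : ℂ) = 2 := by
    rw [← Complex.ofReal_mul, Real.mul_self_sqrt (by norm_num)]; norm_num
  have ha : herm z (alphaV p q) = ((Real.sqrt 2 : ℝ) : ℂ)⁻¹ * (U - Complex.I * V) := by
    rw [herm_eq]
    show ⟪((Real.sqrt 2 : ℝ) : ℂ)⁻¹ • (u + Complex.I • v), z⟫_ℂ = _
    simp only [inner_add_left, inner_smul_left, map_inv₀, Complex.conj_ofReal, Complex.conj_I]
    ring
  have hb : herm z (betaV p q) = ((Real.sqrt 2 : ℝ) : ℂ)⁻¹ * (U + Complex.I * V) := by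
    rw [herm_eq]
    show ⟪((Real.sqrt 2 : ℝ) : ℂ)⁻¹ • (u - Complex.I • v), z⟫_ℂ = _
    simp only [inner_sub_left, inner_smul_left, map_inv₀, Complex.conj_ofReal, Complex.conj_I]
    ring
  have hermgeo : ∀ t : ℝ, herm z (geo t p q) = (Real.cos t : ℂ) * U + (Real.sin t : ℂ) * V := by
    intro t
    rw [herm_eq]
    show ⟪(Real.cos t : ℂ) • u + (Real.sin t : ℂ) • v, z⟫_ℂ = _
    simp only [inner_add_left, inner_smul_left, Complex.conj_ofReal]
    rfl
  have hkey : ∀ t : ℝ, Complex.exp (t * Complex.I) * herm z (alphaV p q)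
      + Complex.exp (-t * Complex.I) * herm z (betaV p q)
      = ((Real.sqrt 2 : ℝ) : ℂ) * herm z (geo t p q) := by
    intro t
    rw [ha, hb, hermgeo t, Complex.exp_mul_I, Complex.exp_mul_I, Complex.cos_neg,
      Complex.sin_neg, ← Complex.ofReal_cos, ← Complex.ofReal_sin]
    field_simp
    push_cast
    linear_combination (-2 * Complex.sin t * V) * Complex.I_sq +
      (-(Complex.cos t * U + Complex.sin t * V)) * s2c
  have habsk : ∀ t : ℝ, ‖Complex.exp (t * Complex.I) * herm z (alphaV p q)
      + Complex.exp (-t * Complex.I) * herm z (betaV p q)‖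
      = Real.sqrt 2 * ‖herm z (geo t p q)‖ := by
    intro t
    rw [hkey t, norm_mul, Complex.norm_real, Real.norm_eq_abs, _root_.abs_of_nonneg (Real.sqrt_nonneg 2)]
  have hFt : ∀ t : ℝ, fsDist z (geo t p q)
      = Real.arccos (‖Complex.exp (t * Complex.I) * herm z (alphaV p q)
        + Complex.exp (-t * Complex.I) * herm z (betaV p q)‖ / (Real.sqrt 2 * ‖z‖)) := by
    intro t
    show Real.arccos (‖herm z (geo t p q)‖ / (‖z‖ * ‖geo t p q‖)) = _
    rw [habsk t, hgeon t, mul_one,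
      mul_div_mul_left _ _ (by positivity : Real.sqrt 2 ≠ 0)]
  -- orthonormality of alphaV, betaV
  have haa : ⟪alphaV p q, alphaV p q⟫_ℂ = 1 := by
    show ⟪((Real.sqrt 2 : ℝ) : ℂ)⁻¹ • (u + Complex.I • v),
      ((Real.sqrt 2 : ℝ) : ℂ)⁻¹ • (u + Complex.I • v)⟫_ℂ = 1
    simp only [inner_add_left, inner_add_right, inner_smul_left, inner_smul_right,
      huu, huv, hvu, hvv, map_inv₀, Complex.conj_ofReal, Complex.conj_I,
      mul_zero, mul_one, add_zero, zero_add]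
    field_simp
    linear_combination (-1 : ℂ) * s2c - Complex.I_sq
  have hbb : ⟪betaV p q, betaV p q⟫_ℂ = 1 := by
    show ⟪((Real.sqrt 2 : ℝ) : ℂ)⁻¹ • (u - Complex.I • v),
      ((Real.sqrt 2 : ℝ) : ℂ)⁻¹ • (u - Complex.I • v)⟫_ℂ = 1
    simp only [inner_sub_left, inner_sub_right, inner_smul_left, inner_smul_right,
      huu, huv, hvu, hvv, map_inv₀, Complex.conj_ofReal, Complex.conj_I,
      mul_zero, mul_one, sub_zero, zero_sub]
    field_simp
    linear_combination (-1 : ℂ) * s2c - Complex.I_sq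
  have hab : ⟪alphaV p q, betaV p q⟫_ℂ = 0 := by
    show ⟪((Real.sqrt 2 : ℝ) : ℂ)⁻¹ • (u + Complex.I • v),
      ((Real.sqrt 2 : ℝ) : ℂ)⁻¹ • (u - Complex.I • v)⟫_ℂ = 0
    simp only [inner_add_left, inner_sub_right, inner_smul_left, inner_smul_right,
      huu, huv, hvu, hvv, map_inv₀, Complex.conj_ofReal, Complex.conj_I,
      mul_zero, mul_one, add_zero, zero_add, sub_zero, zero_sub]
    field_simp
    linear_combination Complex.I_sq
  have hba : ⟪betaV p q, alphaV p q⟫_ℂ = 0 := by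
    rw [← inner_conj_symm, hab, map_zero]
  have hnormsq : ∀ w : EuclideanSpace ℂ (Fin (n+1)), ⟪w, w⟫_ℂ = 1 → ‖w‖ = 1 := by
    intro w hw
    have h2 : (‖w‖:ℝ) ^ 2 = 1 := by rw [@norm_sq_eq_re_inner ℂ, hw]; simp
    nlinarith [norm_nonneg w]
  have han : ‖alphaV p q‖ = 1 := hnormsq _ haa
  have hbn : ‖betaV p q‖ = 1 := hnormsq _ hbb
  have hazle : ‖herm z (alphaV p q)‖ ≤ ‖z‖ := by
    rw [herm_eq]
    calc ‖⟪alphaV p q, z⟫_ℂ‖ ≤ ‖alphaV p q‖ * ‖z‖ := norm_inner_le_norm _ _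
      _ = ‖z‖ := by rw [han, one_mul]
  have hbzle : ‖herm z (betaV p q)‖ ≤ ‖z‖ := by
    rw [herm_eq]
    calc ‖⟪betaV p q, z⟫_ℂ‖ ≤ ‖betaV p q‖ * ‖z‖ := norm_inner_le_norm _ _
      _ = ‖z‖ := by rw [hbn, one_mul]
  -- Bessel
  have hortho : Orthonormal ℂ (![alphaV p q, betaV p q]) := by
    rw [orthonormal_iff_ite]
    intro i j
    fin_cases i <;> fin_cases j <;>
      simp [haa, hab, hba, hbb, han, hbn]
  have hbes : ‖herm z (alphaV p q)‖ ^ 2 + ‖herm z (betaV p q)‖ ^ 2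
      ≤ ‖z‖ ^ 2 := by
    have h := hortho.sum_inner_products_le (s := Finset.univ) z
    rw [Fin.sum_univ_two] at h
    simpa [herm_eq] using h
  set A : ℝ := ‖herm z (alphaV p q)‖ with hA
  set B : ℝ := ‖herm z (betaV p q)‖ with hB
  have hA0 : 0 ≤ A := norm_nonneg _
  have hB0 : 0 ≤ B := norm_nonneg _
  set S : ℝ := A + B with hS
  set N : ℝ := Real.sqrt 2 * ‖z‖ with hN
  have hN0 : 0 < N := by positivity
  have hSN : S ≤ N := by
    nlinarith [sq_nonneg (A - B), Real.sq_sqrt (by norm_num : (2:ℝ) ≥ 0), Real.sqrt_nonneg 2,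
      sq_nonneg (S - N), sq_nonneg (S + N)]
  -- infimum computation
  have hbdd : BddBelow (Set.range fun t : ℝ => fsDist z (geo t p q)) := by
    refine ⟨0, ?_⟩
    rintro x ⟨t, rfl⟩
    exact Real.arccos_nonneg _
  have hDle : (⨅ t : ℝ, fsDist z (geo t p q)) ≤ Real.arccos (S / N) := by
    obtain ⟨t₀, ht₀⟩ := exp_sup (herm z (alphaV p q)) (herm z (betaV p q))
    have hFt₀ : ‖Complex.exp (t₀ * Complex.I) * herm z (alphaV p q)
        + Complex.exp (-t₀ * Complex.I) * herm z (betaV p q)‖ = S := by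
      rw [ht₀, norm_mul, Complex.norm_real, Real.norm_eq_abs, Complex.norm_exp_ofReal_mul_I, mul_one,
        _root_.abs_of_nonneg (by positivity : (0:ℝ) ≤ A + B)]
    calc (⨅ t : ℝ, fsDist z (geo t p q)) ≤ fsDist z (geo t₀ p q) := ciInf_le hbdd t₀
      _ = Real.arccos (S / N) := by rw [hFt t₀, hFt₀]
  have hDge : Real.arccos (S / N) ≤ (⨅ t : ℝ, fsDist z (geo t p q)) := by
    apply le_ciInf
    intro t
    rw [hFt t]
    apply arccos_anti
    · have : (0:ℝ) ≤ ‖Complex.exp (t * Complex.I) * herm z (alphaV p q)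
        + Complex.exp (-t * Complex.I) * herm z (betaV p q)‖ / N := by positivity
      linarith
    · gcongr
      exact exp_bound _ _ t
  have hD : (⨅ t : ℝ, fsDist z (geo t p q)) = Real.arccos (S / N) := le_antisymm hDle hDge
  have hRle1 : S / N ≤ 1 := (div_le_one hN0).mpr hSN
  have hR0 : (0:ℝ) ≤ S / N := by positivity
  have hss : Real.sqrt 2 * Real.sqrt 2 = 2 := Real.mul_self_sqrt (by norm_num)
  refine ⟨?_, ?_, ?_⟩
  · -- part (a)
    intro hlt
    rw [hD] at hlt
    have hcos : Real.cos (Real.pi / 4) < Real.cos (Real.arccos (S / N)) :=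
      Real.cos_lt_cos_of_nonneg_of_le_pi (Real.arccos_nonneg _)
        (by linarith [Real.pi_pos]) hlt
    rw [Real.cos_arccos (by linarith) hRle1, Real.cos_pi_div_four] at hcos
    have hSz : ‖z‖ < S := by
      have h' : Real.sqrt 2 / 2 * N < S := (lt_div_iff₀ hN0).mp hcos
      rw [hN] at h'
      nlinarith
    constructor
    · intro h
      have hA' : A = 0 := by rw [hA, h, norm_zero]
      rw [hS, hA'] at hSz
      linarith [hbzle]
    · intro h
      have hB' : B = 0 := by rw [hB, h, norm_zero]
      rw [hS, hB'] at hSz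
      linarith [hazle]
  · -- part (b)
    intro t
    have hga : herm (geo t p q) (alphaV p q)
        = ((Real.sqrt 2 : ℝ) : ℂ)⁻¹ * ((Real.cos t : ℂ) - Complex.I * (Real.sin t : ℂ)) := by
      rw [herm_eq]
      show ⟪((Real.sqrt 2 : ℝ) : ℂ)⁻¹ • (u + Complex.I • v),
        (Real.cos t : ℂ) • u + (Real.sin t : ℂ) • v⟫_ℂ = _
      simp only [inner_add_left, inner_add_right, inner_smul_left, inner_smul_right,
        huu, huv, hvu, hvv, map_inv₀, Complex.conj_ofReal, Complex.conj_I,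
        mul_zero, mul_one, add_zero, zero_add]
      ring
    have hgb : herm (geo t p q) (betaV p q)
        = ((Real.sqrt 2 : ℝ) : ℂ)⁻¹ * ((Real.cos t : ℂ) + Complex.I * (Real.sin t : ℂ)) := by
      rw [herm_eq]
      show ⟪((Real.sqrt 2 : ℝ) : ℂ)⁻¹ • (u - Complex.I • v),
        (Real.cos t : ℂ) • u + (Real.sin t : ℂ) • v⟫_ℂ = _
      simp only [inner_sub_left, inner_add_right, inner_smul_left, inner_smul_right,
        huu, huv, hvu, hvv, map_inv₀, Complex.conj_ofReal, Complex.conj_I,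
        mul_zero, mul_one, add_zero, zero_add, sub_zero, zero_sub]
      ring
    have habs1 : ‖(Real.cos t : ℂ) - Complex.I * (Real.sin t : ℂ)‖ = 1 := by
      have he : ((Real.cos t : ℂ) - Complex.I * (Real.sin t : ℂ))
          = Complex.exp ((-t : ℝ) * Complex.I) := by
        rw [Complex.exp_mul_I, show ((-t:ℝ):ℂ) = -(t:ℂ) by push_cast; ring,
          Complex.cos_neg, Complex.sin_neg, ← Complex.ofReal_cos, ← Complex.ofReal_sin]
        ring
      rw [he, Complex.norm_exp_ofReal_mul_I]
    have habs2 : ‖(Real.cos t : ℂ) + Complex.I * (Real.sin t : ℂ)‖ = 1 := by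
      have he : ((Real.cos t : ℂ) + Complex.I * (Real.sin t : ℂ))
          = Complex.exp ((t : ℝ) * Complex.I) := by
        rw [Complex.exp_mul_I, ← Complex.ofReal_cos, ← Complex.ofReal_sin]
        ring
      rw [he, Complex.norm_exp_ofReal_mul_I]
    unfold muW
    rw [hga, hgb, hgeon t, norm_mul, norm_mul, norm_inv, Complex.norm_real, Real.norm_eq_abs,
      _root_.abs_of_nonneg (Real.sqrt_nonneg 2), habs1, habs2]
    rw [show (2 * ((Real.sqrt 2)⁻¹ * 1) * ((Real.sqrt 2)⁻¹ * 1) / (1:ℝ)^2) = 1 by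
      field_simp; norm_num]
    simp [Real.log_one]
  · -- part (c)
    intro ha0 hb0
    have hApos : 0 < A := by rw [hA]; exact (norm_pos_iff.mpr ha0)
    have hBpos : 0 < B := by rw [hB]; exact (norm_pos_iff.mpr hb0)
    have hRpos : 0 < S / N := by
      apply div_pos _ hN0; rw [hS]; linarith
    constructor
    · rw [hD]; exact Real.arccos_lt_pi_div_two.mpr hRpos
    · rw [hD, Real.cos_arccos (by linarith) hRle1]
      unfold muW
      rw [Real.log_inv, ← hA, ← hB]
      have harg0 : (0:ℝ) < 2 * A * B / ‖z‖ ^ 2 := by positivity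
      have hN2 : N ^ 2 = 2 * ‖z‖ ^ 2 := by rw [hN, mul_pow]; nlinarith [hss]
      have hkey2 : 2 * A * B / ‖z‖ ^ 2 ≤ (S / N) ^ 2 := by
        rw [div_pow, div_le_div_iff₀ (by positivity) (by positivity), hN2, hS]
        nlinarith [sq_nonneg (A - B)]
      have hlog : Real.log (2 * A * B / ‖z‖ ^ 2) ≤ Real.log ((S / N) ^ 2) :=
        (Real.log_le_log_iff harg0 (by positivity)).mpr hkey2
      rw [Real.log_pow] at hlog
      push_cast at hlog
      linarith
end
end

section
/- Let z, v₁, v₂ ∈ ℂ^{n+1} with |z| = 1 and 0 < d(z,vᵢ) < π/2 for i = 1, 2. Write 1 − γ₀'(z,v₁)·conj(γ₀'(z,v₂)) = x + i·y with x, y ∈ ℝ. Then for every t ∈ ℝ, the points γ_{−t}(z,v₁) and γ_{−t}(z,v₂) are unit vectors with γ_{−t}(z,v₁)·conj(γ_{−t}(z,v₂)) = cos²t + sin²t·(γ₀'(z,v₁)·conj(γ₀'(z,v₂))), and sin²( d(γ_{−t}(z,v₁), γ_{−t}(z,v₂)) ) = 2x·sin²t − (x² + y²)·sin⁴t. -/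
noncomputable section

lemma herm_inner {m : ℕ} (w z : EuclideanSpace ℂ (Fin m)) :
    herm w z = @inner ℂ _ _ z w := by
  simp [herm, PiLp.inner_apply, mul_comm]

lemma key {m : ℕ} (z v : EuclideanSpace ℂ (Fin m)) (hz : ‖z‖ = 1)
    (h0 : 0 < fsDist z v) (h2 : fsDist z v < Real.pi / 2) :
    (inner ℂ z (gammaDir z v) : ℂ) = 0 ∧ (inner ℂ (gammaDir z v) (gammaDir z v) : ℂ) = 1 := by
  set d := fsDist z v with hd
  set c : ℂ := inner ℂ z v with hc
  have hherm : herm v z = c := herm_inner v z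
  set r := ‖c‖ with hr
  have hdval : d = Real.arccos (r / ‖v‖) := by
    rw [hd, fsDist, hz, one_mul, herm_inner, ← inner_conj_symm, ← hc, Complex.norm_conj, ← hr]
  have hpos : 0 < r / ‖v‖ := by
    rw [hdval] at h2
    exact Real.arccos_lt_pi_div_two.mp h2
  have hvpos : 0 < ‖v‖ := by
    rcases div_pos_iff.mp hpos with ⟨_, h⟩ | ⟨h, _⟩
    · exact h
    · exact absurd (norm_nonneg c) (not_le.mpr h)
  have hrpos : 0 < r := by
    rcases div_pos_iff.mp hpos with ⟨h, _⟩ | ⟨_, h⟩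
    · exact h
    · linarith [norm_nonneg v]
  have hcne : c ≠ 0 := by
    simpa [hr, norm_eq_zero] using hrpos.ne'
  have hCS : r ≤ ‖v‖ := by
    have := norm_inner_le_norm (𝕜 := ℂ) z v
    rwa [hz, one_mul, ← hc, ← hr] at this
  have hcos : Real.cos d = r / ‖v‖ := by
    rw [hdval]
    exact Real.cos_arccos (le_trans (by norm_num) (le_of_lt hpos)) ((div_le_one hvpos).mpr hCS)
  have hsin : 0 < Real.sin d := Real.sin_pos_of_pos_of_lt_pi h0
    (lt_trans h2 (by linarith [Real.pi_pos]))
  have hsin2 : Real.sin d ^ 2 = 1 - (r / ‖v‖) ^ 2 := by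
    rw [Real.sin_sq, hcos]
  have hgd : gammaDir z v = (Real.cot d : ℂ) • ((1 / c) • v - z) := by
    rw [gammaDir, hherm, hz, ← hd]
    norm_num
  have hzz : (inner ℂ z z : ℂ) = 1 := by
    rw [inner_self_eq_norm_sq_to_K, hz]; norm_num
  have hvv : (inner ℂ v v : ℂ) = ((‖v‖ : ℝ) : ℂ)^2 := inner_self_eq_norm_sq_to_K v
  have hvz : (inner ℂ v z : ℂ) = (starRingEnd ℂ) c := by
    rw [← inner_conj_symm, ← hc]
  have part1 : (inner ℂ z (gammaDir z v) : ℂ) = 0 := by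
    rw [hgd]
    simp [inner_sub_right, inner_smul_right, hzz, ← hc]
    simp [hz]
    exact Or.inr (by field_simp; ring)
  have hmulconj : (starRingEnd ℂ) c * c = ((r^2 : ℝ) : ℂ) := by
    rw [mul_comm, Complex.mul_conj, Complex.normSq_eq_norm_sq, ← hr]
  have hreal : (Real.cot d)^2 * (‖v‖^2 - r^2) = r^2 := by
    have hsne : Real.sin d ≠ 0 := hsin.ne'
    have h1 : Real.sin d ^ 2 * ‖v‖^2 = ‖v‖^2 - r^2 := by
      rw [hsin2]; field_simp
    rw [Real.cot_eq_cos_div_sin, hcos, ← h1]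
    field_simp
  have hCcne : (starRingEnd ℂ) c ≠ 0 := by
    simpa using hcne
  have hrne : ((r:ℝ):ℂ) ≠ 0 := by exact_mod_cast hrpos.ne'
  have hrealC : ((Real.cot d : ℝ):ℂ)^2 * ((‖v‖:ℂ)^2 - ((r:ℝ):ℂ)^2) = ((r:ℝ):ℂ)^2 := by
    exact_mod_cast hreal
  have part2 : (inner ℂ (gammaDir z v) (gammaDir z v) : ℂ) = 1 := by
    obtain ⟨cc, hccd, hccconj⟩ : ∃ cc : ℂ, cc = (Real.cot d : ℂ) ∧ (starRingEnd ℂ) cc = cc :=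
      ⟨_, rfl, Complex.conj_ofReal _⟩
    rw [hgd, ← hccd]
    simp only [inner_sub_left, inner_sub_right, inner_smul_left, inner_smul_right,
      hzz, hvv, hvz, ← hc, hccconj, one_div, map_inv₀, Complex.conj_conj]
    have hmul : c * (starRingEnd ℂ) c = ((r:ℝ):ℂ)^2 := by
      rw [Complex.mul_conj, Complex.normSq_eq_norm_sq, ← hr]; push_cast; ring
    field_simp [hcne, hCcne]
    rw [← hccd] at hrealC
    linear_combination hrealC - (cc^2 + 1) * hmul
    
  exact ⟨part1, part2⟩

theorem stmt17 {n : ℕ} (z v1 v2 : EuclideanSpace ℂ (Fin (n + 1))) (hz : ‖z‖ = 1)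
    (hv1 : v1 ≠ 0) (hv2 : v2 ≠ 0)
    (h10 : 0 < fsDist z v1) (h12 : fsDist z v1 < Real.pi / 2)
    (h20 : 0 < fsDist z v2) (h22 : fsDist z v2 < Real.pi / 2)
    (x y : ℝ) (hxy : 1 - herm (gammaDir z v1) (gammaDir z v2) = (x : ℂ) + (y : ℂ) * Complex.I)
    (t : ℝ) :
    ‖geo (-t) z v1‖ = 1 ∧ ‖geo (-t) z v2‖ = 1 ∧
    herm (geo (-t) z v1) (geo (-t) z v2) =
      (Real.cos t : ℂ) ^ 2 + (Real.sin t : ℂ) ^ 2 * herm (gammaDir z v1) (gammaDir z v2) ∧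
    Real.sin (fsDist (geo (-t) z v1) (geo (-t) z v2)) ^ 2 =
      2 * x * Real.sin t ^ 2 - (x ^ 2 + y ^ 2) * Real.sin t ^ 4 := by
  obtain ⟨hzg1, hg1g1⟩ := key z v1 hz h10 h12
  obtain ⟨hzg2, hg2g2⟩ := key z v2 hz h20 h22
  set g1 := gammaDir z v1
  set g2 := gammaDir z v2
  have hg1z : (inner ℂ g1 z : ℂ) = 0 := by rw [← inner_conj_symm, hzg1, map_zero]
  have hg2z : (inner ℂ g2 z : ℂ) = 0 := by rw [← inner_conj_symm, hzg2, map_zero]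
  have hzz : (inner ℂ z z : ℂ) = 1 := by
    rw [inner_self_eq_norm_sq_to_K, hz]; norm_num
  have hgeo : ∀ v : EuclideanSpace ℂ (Fin (n+1)),
      geo (-t) z v = (Real.cos t : ℂ) • z - (Real.sin t : ℂ) • gammaDir z v := by
    intro v
    rw [geo, hz, Real.cos_neg, Real.sin_neg]
    push_cast
    module
  have trigC : (Real.cos t : ℂ)^2 + (Real.sin t : ℂ)^2 = 1 := by
    exact_mod_cast congrArg (fun u : ℝ => (u : ℂ)) (Real.cos_sq_add_sin_sq t)
  have hinner : ∀ (w w' : EuclideanSpace ℂ (Fin (n+1))),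
      (inner ℂ w z : ℂ) = 0 → (inner ℂ z w' : ℂ) = 0 →
      (inner ℂ ((Real.cos t : ℂ) • z - (Real.sin t : ℂ) • w)
             ((Real.cos t : ℂ) • z - (Real.sin t : ℂ) • w') : ℂ)
        = (Real.cos t : ℂ)^2 + (Real.sin t : ℂ)^2 * inner ℂ w w' := by
    intro w w' hwz hzw'
    obtain ⟨a, ha, hac⟩ : ∃ a : ℂ, a = ((Real.cos t : ℝ) : ℂ) ∧ (starRingEnd ℂ) a = a :=
      ⟨_, rfl, Complex.conj_ofReal _⟩
    obtain ⟨b, hb, hbc⟩ : ∃ b : ℂ, b = ((Real.sin t : ℝ) : ℂ) ∧ (starRingEnd ℂ) b = b :=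
      ⟨_, rfl, Complex.conj_ofReal _⟩
    rw [← ha, ← hb]
    simp [inner_sub_left, inner_sub_right, inner_smul_left, inner_smul_right,
      hzz, hz, hwz, hzw', hac, hbc]
    ring
  have norm1 : ∀ v : EuclideanSpace ℂ (Fin (n+1)),
      (inner ℂ (gammaDir z v) (gammaDir z v) : ℂ) = 1 →
      (inner ℂ z (gammaDir z v) : ℂ) = 0 → ‖geo (-t) z v‖ = 1 := by
    intro v hgg hzg
    have hgz : (inner ℂ (gammaDir z v) z : ℂ) = 0 := by
      rw [← inner_conj_symm, hzg, map_zero]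
    have h1 : (inner ℂ (geo (-t) z v) (geo (-t) z v) : ℂ) = 1 := by
      rw [hgeo v, hinner _ _ hgz hzg, hgg, mul_one, trigC]
    rw [inner_self_eq_norm_sq_to_K] at h1
    have h' : ‖geo (-t) z v‖ ^ 2 = 1 := by
      have h3 : ((‖geo (-t) z v‖ ^ 2 : ℝ) : ℂ) = ((1:ℝ) : ℂ) := by push_cast; simpa using h1
      exact_mod_cast h3
    nlinarith [norm_nonneg (geo (-t) z v)]
  have hn1 : ‖geo (-t) z v1‖ = 1 := norm1 v1 hg1g1 hzg1
  have hn2 : ‖geo (-t) z v2‖ = 1 := norm1 v2 hg2g2 hzg2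
  have hH : herm (geo (-t) z v1) (geo (-t) z v2) =
      (Real.cos t : ℂ)^2 + (Real.sin t : ℂ)^2 * herm g1 g2 := by
    rw [herm_inner, hgeo v1, hgeo v2, hinner _ _ hg2z hzg1, herm_inner]
  refine ⟨hn1, hn2, hH, ?_⟩
  have hg12 : herm g1 g2 = 1 - ((x : ℂ) + (y : ℂ) * Complex.I) := by
    linear_combination -hxy
  have hHval : herm (geo (-t) z v1) (geo (-t) z v2) =
      ((1 - Real.sin t ^ 2 * x : ℝ) : ℂ) + ((-(Real.sin t ^ 2 * y) : ℝ) : ℂ) * Complex.I := by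
    rw [hH, hg12]
    push_cast [-Complex.ofReal_cos, -Complex.ofReal_sin]
    linear_combination trigC
  set A := ‖(herm (geo (-t) z v1) (geo (-t) z v2))‖ with hA
  have hAle : A ≤ 1 := by
    rw [hA, herm_inner]
    calc ‖(inner ℂ (geo (-t) z v2) (geo (-t) z v1) : ℂ)‖
        ≤ ‖geo (-t) z v2‖ * ‖geo (-t) z v1‖ := norm_inner_le_norm _ _
      _ = 1 := by rw [hn1, hn2]; norm_num
  have hAnn : 0 ≤ A := norm_nonneg _
  have hA2 : A ^ 2 = (1 - Real.sin t ^ 2 * x)^2 + (Real.sin t ^ 2 * y)^2 := by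
    rw [hA, hHval, Complex.sq_norm, Complex.normSq_add_mul_I]
    ring
  have hfs : fsDist (geo (-t) z v1) (geo (-t) z v2) = Real.arccos A := by
    rw [fsDist, hn1, hn2, ← hA]
    norm_num
  rw [hfs, Real.sin_arccos, Real.sq_sqrt (by nlinarith), hA2]
  ring
end
end
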